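/- arXiv:1708.08911 — 5 statements merged into one kernel-verified Lean document; each statement's English description precedes it below -/
import Mathlib

section
/- For every x > 0, the function t ↦ pen(t|θ) is differentiable at x and its derivative at x equals −λ⋆(x,θ). -/
noncomputable def pstar (l1 l0 θ x : ℝ) : ℝ :=
  θ * l1 * Real.exp (-l1 * |x|) /
    (θ * l1 * Real.exp (-l1 * |x|) + (1 - θ) * l0 * Real.exp (-l0 * |x|))

noncomputable def lamstar (l1 l0 θ x : ℝ) : ℝ :=
  l1 * pstar l1 l0 θ x + l0 * (1 - pstar l1 l0 θ x)

noncomputable def ssDensity (l1 l0 θ x : ℝ) : ℝ :=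
  θ * (l1 / 2) * Real.exp (-l1 * |x|) + (1 - θ) * (l0 / 2) * Real.exp (-l0 * |x|)

noncomputable def pen (l1 l0 θ x : ℝ) : ℝ :=
  Real.log (ssDensity l1 l0 θ x / ssDensity l1 l0 θ 0)

theorem stmt3 (l1 l0 θ : ℝ) (hl1 : 0 < l1) (hl : l1 < l0) (hθ : θ ∈ Set.Ioo (0 : ℝ) 1) :
    ∀ x : ℝ, 0 < x → HasDerivAt (fun t : ℝ => pen l1 l0 θ t) (-(lamstar l1 l0 θ x)) x := by
  obtain ⟨hθ0, hθ1⟩ := hθ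
  have hl0 : 0 < l0 := hl1.trans hl
  have hθ1' : 0 < 1 - θ := by linarith
  intro x hx
  have hfpos : ∀ t : ℝ, 0 < ssDensity l1 l0 θ t := by
    intro t; unfold ssDensity; positivity
  -- derivative of the no-abs version
  have h1 : HasDerivAt
      (fun t : ℝ => θ * (l1 / 2) * Real.exp (-l1 * t) + (1 - θ) * (l0 / 2) * Real.exp (-l0 * t))
      (θ * (l1 / 2) * (Real.exp (-l1 * x) * (-l1)) +
        (1 - θ) * (l0 / 2) * (Real.exp (-l0 * x) * (-l0))) x := by
    have e1 : HasDerivAt (fun t : ℝ => -l1 * t) (-l1) x := by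
      simpa using (hasDerivAt_id x).const_mul (-l1)
    have e0 : HasDerivAt (fun t : ℝ => -l0 * t) (-l0) x := by
      simpa using (hasDerivAt_id x).const_mul (-l0)
    exact ((e1.exp.const_mul (θ * (l1 / 2))).add (e0.exp.const_mul ((1 - θ) * (l0 / 2))))
  have hne : θ * (l1 / 2) * Real.exp (-l1 * x) + (1 - θ) * (l0 / 2) * Real.exp (-l0 * x) ≠ 0 := by
    positivity
  have h2 := h1.log hne
  -- transfer to log ∘ ssDensity via eventual equality (|t| = t near x)
  have hev : (fun t : ℝ => Real.log (ssDensity l1 l0 θ t)) =ᶠ[nhds x]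
      (fun t : ℝ => Real.log (θ * (l1 / 2) * Real.exp (-l1 * t) +
        (1 - θ) * (l0 / 2) * Real.exp (-l0 * t))) := by
    filter_upwards [eventually_gt_nhds hx] with t ht
    rw [ssDensity, abs_of_pos ht]
  have h3 : HasDerivAt (fun t : ℝ => Real.log (ssDensity l1 l0 θ t))
      ((θ * (l1 / 2) * (Real.exp (-l1 * x) * (-l1)) +
        (1 - θ) * (l0 / 2) * (Real.exp (-l0 * x) * (-l0))) /
        (θ * (l1 / 2) * Real.exp (-l1 * x) + (1 - θ) * (l0 / 2) * Real.exp (-l0 * x))) x :=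
    h2.congr_of_eventuallyEq hev
  -- pen t = log (ssDensity t) - log (ssDensity 0)
  have hpen : (fun t : ℝ => pen l1 l0 θ t) =
      fun t : ℝ => Real.log (ssDensity l1 l0 θ t) - Real.log (ssDensity l1 l0 θ 0) := by
    funext t
    exact Real.log_div (hfpos t).ne' (hfpos 0).ne'
  rw [hpen]
  have h4 := h3.sub_const (Real.log (ssDensity l1 l0 θ 0))
  convert h4 using 1
  · rfl
  · rfl
  -- value identity
  have habs : |x| = x := abs_of_pos hx
  have hden : θ * l1 * Real.exp (-l1 * x) + (1 - θ) * l0 * Real.exp (-l0 * x) ≠ 0 := by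
    positivity
  rw [lamstar, pstar, habs]
  field_simp
  ring
end

section
/- For every x > 0, the second derivative of the function t ↦ pen(t|θ) at x equals (λ0 − λ1)² · p⋆(x,θ) · (1 − p⋆(x,θ)), which is strictly positive; consequently, the function t ↦ pen(t|θ) is strictly convex on (0, ∞). -/
private lemma expDeriv (c x : ℝ) :
    HasDerivAt (fun t : ℝ => Real.exp (c * t)) (c * Real.exp (c * x)) x := by
  simpa [mul_comm] using ((hasDerivAt_id x).const_mul c).exp

section

variable (l1 l0 θ : ℝ)

private noncomputable def G : ℝ → ℝ := fun t =>
  θ * (l1 / 2) * Real.exp (-l1 * t) + (1 - θ) * (l0 / 2) * Real.exp (-l0 * t)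

private noncomputable def D1 : ℝ → ℝ := fun t =>
  θ * (l1 / 2) * (-l1 * Real.exp (-l1 * t)) + (1 - θ) * (l0 / 2) * (-l0 * Real.exp (-l0 * t))

private noncomputable def D2 : ℝ → ℝ := fun t =>
  θ * (l1 / 2) * (-l1 * (-l1 * Real.exp (-l1 * t)))
    + (1 - θ) * (l0 / 2) * (-l0 * (-l0 * Real.exp (-l0 * t)))

private lemma hG_deriv (t : ℝ) : HasDerivAt (G l1 l0 θ) (D1 l1 l0 θ t) t := by
  exact ((expDeriv (-l1) t).const_mul _).add ((expDeriv (-l0) t).const_mul _)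

private lemma hD1_deriv (t : ℝ) : HasDerivAt (D1 l1 l0 θ) (D2 l1 l0 θ t) t := by
  have h1 := ((expDeriv (-l1) t).const_mul (-l1)).const_mul (θ * (l1 / 2))
  have h2 := ((expDeriv (-l0) t).const_mul (-l0)).const_mul ((1 - θ) * (l0 / 2))
  exact h1.add h2

end

theorem stmt5 (l1 l0 θ : ℝ) (hl1 : 0 < l1) (hl : l1 < l0) (hθ : θ ∈ Set.Ioo (0 : ℝ) 1) :
    (∀ x : ℝ, 0 < x →
      deriv (deriv (fun t : ℝ => pen l1 l0 θ t)) x =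
          (l0 - l1) ^ 2 * pstar l1 l0 θ x * (1 - pstar l1 l0 θ x) ∧
      0 < (l0 - l1) ^ 2 * pstar l1 l0 θ x * (1 - pstar l1 l0 θ x)) ∧
    StrictConvexOn ℝ (Set.Ioi (0 : ℝ)) (fun t : ℝ => pen l1 l0 θ t) := by
  obtain ⟨hθ0, hθ1⟩ := hθ
  have hl0 : 0 < l0 := hl1.trans hl
  have hθ1' : 0 < 1 - θ := by linarith
  -- positivity of G
  have hGpos : ∀ t : ℝ, 0 < G l1 l0 θ t := fun t => by
    have := Real.exp_pos (-l1 * t); have := Real.exp_pos (-l0 * t)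
    unfold G; positivity
  -- positivity of ssDensity
  have hSpos : ∀ t : ℝ, 0 < ssDensity l1 l0 θ t := fun t => by
    have := Real.exp_pos (-l1 * |t|); have := Real.exp_pos (-l0 * |t|)
    unfold ssDensity; positivity
  set penS : ℝ → ℝ := fun t => Real.log (G l1 l0 θ t) - Real.log (G l1 l0 θ 0) with hpenS
  -- pen agrees with penS on Ioi 0
  have hagree : ∀ t : ℝ, 0 < t → pen l1 l0 θ t = penS t := by
    intro t ht
    have hS0 : ssDensity l1 l0 θ 0 = G l1 l0 θ 0 := by
      simp [ssDensity, G]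
    have hSt : ssDensity l1 l0 θ t = G l1 l0 θ t := by
      simp [ssDensity, G, abs_of_pos ht]
    rw [pen, hS0, hSt, Real.log_div (hGpos t).ne' (hGpos 0).ne']
  -- derivative computations for penS
  have hpenS_deriv : ∀ t : ℝ, HasDerivAt penS (D1 l1 l0 θ t / G l1 l0 θ t) t := by
    intro t
    exact ((hG_deriv l1 l0 θ t).log (hGpos t).ne').sub_const _
  have hderiv_penS : deriv penS = fun t => D1 l1 l0 θ t / G l1 l0 θ t := by
    funext t; exact (hpenS_deriv t).deriv
  have hsecond : ∀ t : ℝ, deriv (deriv penS) t =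
      (D2 l1 l0 θ t * G l1 l0 θ t - D1 l1 l0 θ t * D1 l1 l0 θ t) / (G l1 l0 θ t) ^ 2 := by
    intro t
    rw [hderiv_penS]
    exact (((hD1_deriv l1 l0 θ t).div (hG_deriv l1 l0 θ t) (hGpos t).ne')).deriv
  -- the algebraic identity at x > 0
  have hkey : ∀ x : ℝ, 0 < x →
      (D2 l1 l0 θ x * G l1 l0 θ x - D1 l1 l0 θ x * D1 l1 l0 θ x) / (G l1 l0 θ x) ^ 2
        = (l0 - l1) ^ 2 * pstar l1 l0 θ x * (1 - pstar l1 l0 θ x) := by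
    intro x hx
    have hax : 0 < θ * l1 * Real.exp (-l1 * x) := by
      have := Real.exp_pos (-l1 * x); positivity
    have hbx : 0 < (1 - θ) * l0 * Real.exp (-l0 * x) := by
      have := Real.exp_pos (-l0 * x); positivity
    have hab : (θ * l1 * Real.exp (-l1 * x) + (1 - θ) * l0 * Real.exp (-l0 * x)) ≠ 0 :=
      (add_pos hax hbx).ne'
    rw [pstar, abs_of_pos hx]
    unfold G D1 D2
    field_simp
    ring
  -- eventual equality of second derivatives
  have hdd : ∀ x : ℝ, 0 < x →
      deriv (deriv (fun t : ℝ => pen l1 l0 θ t)) x = deriv (deriv penS) x := by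
    intro x hx
    have hev : (fun t : ℝ => pen l1 l0 θ t) =ᶠ[nhds x] penS := by
      filter_upwards [Ioi_mem_nhds hx] with t ht using hagree t ht
    exact hev.deriv.deriv_eq
  have hpst : ∀ x : ℝ, 0 < x →
      0 < (l0 - l1) ^ 2 * pstar l1 l0 θ x * (1 - pstar l1 l0 θ x) := by
    intro x hx
    have hax : 0 < θ * l1 * Real.exp (-l1 * |x|) := by
      have := Real.exp_pos (-l1 * |x|); positivity
    have hbx : 0 < (1 - θ) * l0 * Real.exp (-l0 * |x|) := by
      have := Real.exp_pos (-l0 * |x|); positivity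
    have hp : 0 < pstar l1 l0 θ x := div_pos hax (add_pos hax hbx)
    have hp1 : pstar l1 l0 θ x < 1 := by
      rw [pstar, div_lt_one (add_pos hax hbx)]; linarith
    have hll : 0 < (l0 - l1) ^ 2 := pow_pos (sub_pos.mpr hl) 2
    have : 0 < 1 - pstar l1 l0 θ x := by linarith
    positivity
  constructor
  · intro x hx
    refine ⟨?_, hpst x hx⟩
    rw [hdd x hx, hsecond x, hkey x hx]
  · apply strictConvexOn_of_deriv2_pos (convex_Ioi 0)
    · -- continuity of pen on Ioi 0
      have hc : Continuous (fun t : ℝ => ssDensity l1 l0 θ t / ssDensity l1 l0 θ 0) := by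
        apply Continuous.div_const
        unfold ssDensity
        fun_prop
      have : Continuous (fun t : ℝ => pen l1 l0 θ t) := by
        apply hc.log
        intro t
        exact (div_pos (hSpos t) (hSpos 0)).ne'
      exact this.continuousOn
    · intro x hx
      rw [interior_Ioi] at hx
      have h2 : deriv^[2] (fun t : ℝ => pen l1 l0 θ t) x
          = deriv (deriv (fun t : ℝ => pen l1 l0 θ t)) x := by
        simp [Function.iterate_succ, Function.iterate_zero]
      rw [h2, hdd x hx, hsecond x, hkey x hx]
      exact hpst x hx
end

section
/- For every real number x, λ1 < λ⋆(x,θ) < λ0; moreover, for all real numbers x1, x2 with 0 ≤ x1 < x2, one has λ⋆(x2,θ) < λ⋆(x1,θ), i.e., the adaptive penalty λ⋆ is strictly decreasing as a function of |x| and always lies strictly between the slab penalty λ1 and the spike penalty λ0. -/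
theorem stmt7 (l1 l0 θ : ℝ) (hl1 : 0 < l1) (hl : l1 < l0) (hθ : θ ∈ Set.Ioo (0 : ℝ) 1) :
    (∀ x : ℝ, l1 < lamstar l1 l0 θ x ∧ lamstar l1 l0 θ x < l0) ∧
    (∀ x1 x2 : ℝ, 0 ≤ x1 → x1 < x2 → lamstar l1 l0 θ x2 < lamstar l1 l0 θ x1) := by
  obtain ⟨hθ0, hθ1⟩ := hθ
  have hθ1' : 0 < 1 - θ := by linarith
  have hl0 : 0 < l0 := hl1.trans hl
  have hA : ∀ x : ℝ, 0 < θ * l1 * Real.exp (-l1 * |x|) := fun x => by positivity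
  have hB : ∀ x : ℝ, 0 < (1 - θ) * l0 * Real.exp (-l0 * |x|) := fun x => by positivity
  have hp : ∀ x : ℝ, 0 < pstar l1 l0 θ x ∧ pstar l1 l0 θ x < 1 := fun x => by
    have hA := hA x; have hB := hB x
    constructor
    · exact div_pos hA (by linarith)
    · rw [pstar, div_lt_one (by linarith)]; linarith
  constructor
  · intro x
    obtain ⟨h0, h1⟩ := hp x
    unfold lamstar
    constructor <;> nlinarith
  · intro x1 x2 hx1 hx12
    have ha1 : |x1| = x1 := abs_of_nonneg hx1
    have ha2 : |x2| = x2 := abs_of_nonneg (hx1.trans hx12.le)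
    have hA1 := hA x1; have hB1 := hB x1; have hA2 := hA x2; have hB2 := hB x2
    rw [ha1] at hA1 hB1; rw [ha2] at hA2 hB2
    have key : pstar l1 l0 θ x1 < pstar l1 l0 θ x2 := by
      unfold pstar
      rw [ha1, ha2, div_lt_div_iff₀ (by linarith) (by linarith)]
      have hexp : Real.exp (-l1 * x1) * Real.exp (-l0 * x2) <
          Real.exp (-l1 * x2) * Real.exp (-l0 * x1) := by
        rw [← Real.exp_add, ← Real.exp_add]
        apply Real.exp_lt_exp.mpr
        nlinarith
      have hc : 0 < θ * l1 * ((1 - θ) * l0) := by positivity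
      nlinarith [mul_lt_mul_of_pos_left hexp hc]
    obtain ⟨hp1, _⟩ := hp x1
    obtain ⟨_, hp2⟩ := hp x2
    unfold lamstar
    nlinarith [key]
end

section
/- Let n > 0 and z be real numbers, and let ρ : ℝ → ℝ be an even function with ρ(0) = 0. Define Δ = inf_{t>0} { n t/2 − ρ(t)/t } (an extended real number) and g(b) = z b − (n/2) b² + ρ(b). Then: (i) if |z| < Δ, then g(b) < g(0) for every b ≠ 0, so that 0 is the unique global maximizer of g; and (ii) if |z| > Δ, then there exists b ∈ ℝ with g(b) > g(0), so that 0 is not a global maximizer of g. -/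
theorem stmt10 (n z : ℝ) (hn : 0 < n)
    (ρ : ℝ → ℝ) (heven : ∀ x : ℝ, ρ (-x) = ρ x) (hρ0 : ρ 0 = 0)
    (Δ : EReal)
    (hΔ : Δ = sInf {v : EReal | ∃ t : ℝ, 0 < t ∧
      v = ((n * t / 2 - ρ t / t : ℝ) : EReal)})
    (g : ℝ → ℝ) (hg : ∀ b : ℝ, g b = z * b - n / 2 * b ^ 2 + ρ b) :
    (((|z| : ℝ) : EReal) < Δ → ∀ b : ℝ, b ≠ 0 → g b < g 0) ∧
    (Δ < ((|z| : ℝ) : EReal) → ∃ b : ℝ, g 0 < g b) := by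
  have hg0 : g 0 = 0 := by simp [hg, hρ0]
  constructor
  · intro h b hb
    set t := |b| with ht
    have ht0 : 0 < t := abs_pos.mpr hb
    have hle : Δ ≤ ((n * t / 2 - ρ t / t : ℝ) : EReal) := by
      rw [hΔ]; exact sInf_le ⟨t, ht0, rfl⟩
    have h1 : (|z| : ℝ) < n * t / 2 - ρ t / t := by
      exact_mod_cast lt_of_lt_of_le h hle
    have hρb : ρ b = ρ t := by
      rcases abs_choice b with h' | h'
      · rw [ht, h']
      · rw [ht, h', heven]
    have hzb : z * b ≤ |z| * t := by
      calc z * b ≤ |z * b| := le_abs_self _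
        _ = |z| * |b| := abs_mul z b
    have hb2 : b ^ 2 = t ^ 2 := by rw [ht, sq_abs]
    rw [hg, hg0, hρb, hb2]
    have ht0' : t ≠ 0 := ne_of_gt ht0
    have key : |z| * t < n / 2 * t ^ 2 - ρ t := by
      have h2 := (mul_lt_mul_iff_of_pos_right ht0).mpr h1
      rw [sub_mul, div_mul_cancel₀ _ ht0'] at h2
      calc |z| * t < n * t / 2 * t - ρ t := h2
        _ = n / 2 * t ^ 2 - ρ t := by ring
    nlinarith
  · intro h
    rw [hΔ] at h
    obtain ⟨v, ⟨t, ht0, rfl⟩, hv⟩ := sInf_lt_iff.mp h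
    have h1 : n * t / 2 - ρ t / t < |z| := by exact_mod_cast hv
    have ht0' : t ≠ 0 := ne_of_gt ht0
    have key : n / 2 * t ^ 2 - ρ t < |z| * t := by
      have h2 := (mul_lt_mul_iff_of_pos_right ht0).mpr h1
      rw [sub_mul, div_mul_cancel₀ _ ht0'] at h2
      calc n / 2 * t ^ 2 - ρ t = n * t / 2 * t - ρ t := by ring
        _ < |z| * t := h2
    by_cases hz : 0 ≤ z
    · refine ⟨t, ?_⟩
      rw [hg0, hg]
      rw [abs_of_nonneg hz] at key
      nlinarith
    · refine ⟨-t, ?_⟩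
      rw [hg0, hg, heven]
      rw [abs_of_neg (not_le.mp hz)] at key
      nlinarith
end

section
/- Under the probability measure μ on {0,1} × ℝ, the function (γ, x) ↦ p⋆(x,θ) is a version of the conditional expectation of the function (γ, x) ↦ γ given the σ-algebra generated by the projection (γ, x) ↦ x; that is, E_μ[γ | x] = p⋆(x,θ) holds μ-almost everywhere. -/
open MeasureTheory

noncomputable def laplaceMeasure (l : ℝ) : Measure ℝ :=
  volume.withDensity fun x => ENNReal.ofReal (l / 2 * Real.exp (-l * |x|))

open Set
open scoped NNReal ENNReal

lemma lapDen_integrable {l : ℝ} (hl : 0 < l) :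
    Integrable (fun x : ℝ => l / 2 * Real.exp (-l * |x|)) := by
  apply Integrable.const_mul
  have hIoi : IntegrableOn (fun x : ℝ => Real.exp (-l * |x|)) (Ioi 0) :=
    (exp_neg_integrableOn_Ioi 0 hl).congr_fun
      (fun x hx => by rw [abs_of_pos hx]) measurableSet_Ioi
  have hIic : IntegrableOn (fun x : ℝ => Real.exp (-l * |x|)) (Iic 0) := by
    rw [← Measure.map_neg_eq_self (volume : Measure ℝ)]
    have m : MeasurableEmbedding fun x : ℝ => -x := (Homeomorph.neg ℝ).measurableEmbedding
    rw [m.integrableOn_map_iff]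
    simp_rw [Function.comp_def, abs_neg, neg_preimage, neg_Iic, neg_zero]
    exact (integrableOn_Ici_iff_integrableOn_Ioi).mpr hIoi
  have h := hIic.union hIoi
  rwa [Iic_union_Ioi, integrableOn_univ] at h

lemma laplace_finite {l : ℝ} (hl : 0 < l) : IsFiniteMeasure (laplaceMeasure l) := by
  constructor
  rw [laplaceMeasure, withDensity_apply _ MeasurableSet.univ, setLIntegral_univ]
  have hb := (lapDen_integrable hl).hasFiniteIntegral
  refine lt_of_le_of_lt (lintegral_mono fun x => ?_) hb
  rw [Real.enorm_eq_ofReal_abs]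
  exact ENNReal.ofReal_le_ofReal (le_abs_self _)

lemma lap_set_integral {l : ℝ} (hl : 0 < l) (g : ℝ → ℝ) {t : Set ℝ} (ht : MeasurableSet t) :
    ∫ x in t, g x ∂(laplaceMeasure l) = ∫ x in t, g x * (l / 2 * Real.exp (-l * |x|)) := by
  have hd : Measurable fun x : ℝ => l / 2 * Real.exp (-l * |x|) := by fun_prop
  rw [laplaceMeasure]
  have h : (fun x : ℝ => ENNReal.ofReal (l / 2 * Real.exp (-l * |x|)))
      = fun x => (((fun y : ℝ => (l / 2 * Real.exp (-l * |y|)).toNNReal) x : ℝ≥0) : ℝ≥0∞) := rfl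
  rw [h, setIntegral_withDensity_eq_setIntegral_smul
    (f := fun y : ℝ => (l / 2 * Real.exp (-l * |y|)).toNNReal)
    (measurable_real_toNNReal.comp hd) g ht]
  refine setIntegral_congr_fun ht fun x _ => ?_
  rw [NNReal.smul_def, Real.coe_toNNReal _ (by positivity)]
  simp only [smul_eq_mul]
  ring

lemma bdd_integrable {α : Type*} [MeasurableSpace α] (μ : Measure α) [IsFiniteMeasure μ]
    {g : α → ℝ} (hg : Measurable g) (C : ℝ) (hC : ∀ x, ‖g x‖ ≤ C) : Integrable g μ :=
  ⟨hg.aestronglyMeasurable, HasFiniteIntegral.of_bounded (Filter.Eventually.of_forall hC)⟩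

lemma diracProd_setIntegral (a : Fin 2) (ν : Measure ℝ) [IsFiniteMeasure ν]
    {g : Fin 2 × ℝ → ℝ} (hg : Measurable g) {t : Set ℝ} (ht : MeasurableSet t) :
    ∫ p in Prod.snd ⁻¹' t, g p ∂((Measure.dirac a).prod ν) = ∫ x in t, g (a, x) ∂ν := by
  rw [Measure.dirac_prod, Measure.restrict_map measurable_prodMk_left (measurable_snd ht)]
  rw [integral_map measurable_prodMk_left.aemeasurable hg.aestronglyMeasurable]
  rfl

theorem stmt13 (l1 l0 θ : ℝ) (hl1 : 0 < l1) (hl : l1 < l0) (hθ : θ ∈ Set.Ioo (0 : ℝ) 1)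
    (μ : Measure (Fin 2 × ℝ))
    (hμ : μ = ENNReal.ofReal θ • ((Measure.dirac (1 : Fin 2)).prod (laplaceMeasure l1)) +
      ENNReal.ofReal (1 - θ) • ((Measure.dirac (0 : Fin 2)).prod (laplaceMeasure l0))) :
    (fun p : Fin 2 × ℝ => pstar l1 l0 θ p.2) =ᵐ[μ]
      μ[(fun p : Fin 2 × ℝ => ((p.1 : ℕ) : ℝ)) |
        MeasurableSpace.comap (Prod.snd : Fin 2 × ℝ → ℝ) inferInstance] := by
  subst hμ
  obtain ⟨hθ0, hθ1⟩ := hθ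
  have hl0 : 0 < l0 := hl1.trans hl
  have hθ1' : 0 < 1 - θ := by linarith
  haveI := laplace_finite hl1
  haveI := laplace_finite hl0
  set ν1 := laplaceMeasure l1
  set ν0 := laplaceMeasure l0
  set ρ1 := (Measure.dirac (1 : Fin 2)).prod ν1 with hρ1
  set ρ0 := (Measure.dirac (0 : Fin 2)).prod ν0 with hρ0
  haveI : IsFiniteMeasure (ENNReal.ofReal θ • ρ1) := by
    constructor
    rw [Measure.smul_apply, smul_eq_mul]
    exact ENNReal.mul_lt_top ENNReal.ofReal_lt_top (measure_lt_top _ _)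
  haveI : IsFiniteMeasure (ENNReal.ofReal (1 - θ) • ρ0) := by
    constructor
    rw [Measure.smul_apply, smul_eq_mul]
    exact ENNReal.mul_lt_top ENNReal.ofReal_lt_top (measure_lt_top _ _)
  set μ := ENNReal.ofReal θ • ρ1 + ENNReal.ofReal (1 - θ) • ρ0 with hμdef
  haveI : IsFiniteMeasure μ := by rw [hμdef]; infer_instance
  have hm : MeasurableSpace.comap (Prod.snd : Fin 2 × ℝ → ℝ) inferInstance ≤
      (inferInstance : MeasurableSpace (Fin 2 × ℝ)) := measurable_snd.comap_le
  -- pstar facts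
  have hden : ∀ x : ℝ, 0 < θ * l1 * Real.exp (-l1 * |x|) + (1 - θ) * l0 * Real.exp (-l0 * |x|) :=
    fun x => by positivity
  have hpc : Continuous fun x : ℝ => pstar l1 l0 θ x := by
    unfold pstar
    exact Continuous.div (by fun_prop) (by fun_prop) fun x => (hden x).ne'
  have hpb : ∀ x : ℝ, ‖pstar l1 l0 θ x‖ ≤ 1 := by
    intro x
    rw [Real.norm_eq_abs, pstar, abs_of_nonneg (div_nonneg (by positivity) (hden x).le),
      div_le_one (hden x)]
    nlinarith [mul_pos (mul_pos hθ1' hl0) (Real.exp_pos (-l0 * |x|))]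
  have hgm : Measurable fun p : Fin 2 × ℝ => pstar l1 l0 θ p.2 :=
    hpc.measurable.comp measurable_snd
  have hfm : Measurable fun p : Fin 2 × ℝ => ((p.1 : ℕ) : ℝ) :=
    Measurable.comp (g := fun i : Fin 2 => ((i : ℕ) : ℝ)) (f := Prod.fst)
      (measurable_of_countable _) measurable_fst
  have hfb : ∀ p : Fin 2 × ℝ, ‖((p.1 : ℕ) : ℝ)‖ ≤ 1 := by
    intro p
    rw [Real.norm_eq_abs, abs_of_nonneg (by positivity)]
    exact_mod_cast Fin.is_le p.1
  -- key integral computation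
  have key : ∀ (h : Fin 2 × ℝ → ℝ), Measurable h → (∀ p, ‖h p‖ ≤ 1) →
      ∀ t : Set ℝ, MeasurableSet t →
      ∫ p in Prod.snd ⁻¹' t, h p ∂μ
        = θ * (∫ x in t, h (1, x) * (l1 / 2 * Real.exp (-l1 * |x|)))
          + (1 - θ) * (∫ x in t, h (0, x) * (l0 / 2 * Real.exp (-l0 * |x|))) := by
    intro h hmeas hbdd t ht
    rw [hμdef, Measure.restrict_add, Measure.restrict_smul, Measure.restrict_smul,
      integral_add_measure
        ((bdd_integrable _ hmeas 1 hbdd).restrict.smul_measure ENNReal.ofReal_lt_top.ne)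
        ((bdd_integrable _ hmeas 1 hbdd).restrict.smul_measure ENNReal.ofReal_lt_top.ne),
      integral_smul_measure, integral_smul_measure,
      ENNReal.toReal_ofReal hθ0.le, ENNReal.toReal_ofReal hθ1'.le, smul_eq_mul, smul_eq_mul,
      diracProd_setIntegral _ _ hmeas ht, diracProd_setIntegral _ _ hmeas ht,
      lap_set_integral hl1 _ ht, lap_set_integral hl0 _ ht]
  refine ae_eq_condExp_of_forall_setIntegral_eq hm
      (bdd_integrable μ hfm 1 hfb) (fun s _ _ => (bdd_integrable μ hgm 1 fun p => hpb p.2).integrableOn)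
      (fun s hs _ => ?_)
      ⟨fun p => pstar l1 l0 θ p.2,
        (hpc.measurable.comp (measurable_iff_comap_le.mpr le_rfl)).stronglyMeasurable,
        Filter.EventuallyEq.rfl⟩
  obtain ⟨t, ht, rfl⟩ := hs
  rw [key _ hgm (fun p => hpb p.2) t ht, key _ hfm hfb t ht]
  have h1 : ∀ x : ℝ, (((1 : Fin 2) : ℕ) : ℝ) = 1 := fun _ => by norm_num
  have h0 : ∀ x : ℝ, (((0 : Fin 2) : ℕ) : ℝ) = 0 := fun _ => by norm_num
  simp only [h1 0, h0 0, zero_mul, integral_zero, mul_zero, add_zero]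
  -- now combine the two integrals on the LHS
  have i1 : Integrable (fun x => pstar l1 l0 θ x * (l1 / 2 * Real.exp (-l1 * |x|)))
      (volume.restrict t) :=
    ((lapDen_integrable hl1).restrict).bdd_mul hpc.aestronglyMeasurable (Filter.Eventually.of_forall hpb)
  have i0 : Integrable (fun x => pstar l1 l0 θ x * (l0 / 2 * Real.exp (-l0 * |x|)))
      (volume.restrict t) :=
    ((lapDen_integrable hl0).restrict).bdd_mul hpc.aestronglyMeasurable (Filter.Eventually.of_forall hpb)
  rw [← integral_const_mul θ, ← integral_const_mul (1 - θ),
    ← integral_add (i1.const_mul θ) (i0.const_mul (1 - θ)), ← integral_const_mul θ]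
  refine setIntegral_congr_fun ht fun x _ => ?_
  have hD := (hden x).ne'
  simp only [pstar]
  field_simp
end
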